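/- Let S be a finite nonempty set of points in the Euclidean plane ℝ² and let d ∈ ℝ² be a point not belonging to the convex hull of S. Then there exist points x, y ∈ S such that the convex hull of S is contained in the cone {d + α·(x − d) + β·(y − d) : α ≥ 0, β ≥ 0}. -/

import Mathlib

open Real EuclideanGeometry
open scoped RealInnerProductSpace

noncomputable section

/-- The Euclidean plane ℝ². -/
abbrev Plane : Type := EuclideanSpace ℝ (Fin 2)

instance : Fact (Module.finrank ℝ Plane = 2) := ⟨finrank_euclideanSpace_fin⟩

/-- The standard orientation of the plane. -/
def planeOrientation : Orientation ℝ Plane (Fin 2) :=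
  (EuclideanSpace.basisFun (Fin 2) ℝ).toBasis.orientation

/-- The determinant `det(p, q)` of the 2×2 matrix with columns `p`, `q`. -/
def det2 (p q : Plane) : ℝ := p 0 * q 1 - p 1 * q 0

/-- A set of points is in general position if no three of its points are collinear. -/
def GeneralPosition (S : Set Plane) : Prop :=
  ∀ p ∈ S, ∀ q ∈ S, ∀ r ∈ S, p ≠ q → p ≠ r → q ≠ r →
    ¬ Collinear ℝ ({p, q, r} : Set Plane)

/-- `v : ZMod n → Plane` is a polygonization of `S`: a bijection from `ℤ/nℤ` onto `S`
such that the closed segments `[v i, v (i+1)]` form a simple closed polygon: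
consecutive segments meet exactly in their common endpoint, and non-consecutive
segments are disjoint. -/
def IsPolygonization (n : ℕ) (S : Set Plane) (v : ZMod n → Plane) : Prop :=
  Function.Injective v ∧ Set.range v = S ∧
  (∀ i : ZMod n,
    segment ℝ (v i) (v (i + 1)) ∩ segment ℝ (v (i + 1)) (v (i + 2)) = {v (i + 1)}) ∧
  (∀ i j : ZMod n, i ≠ j → i + 1 ≠ j → j + 1 ≠ i →
    Disjoint (segment ℝ (v i) (v (i + 1))) (segment ℝ (v j) (v (j + 1))))

/-- A polygonization is counterclockwise if its signed area
`(1/2)·Σ_i det(v i, v (i+1))` is positive. -/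
def Counterclockwise (n : ℕ) (v : ZMod n → Plane) : Prop :=
  0 < (1 / 2 : ℝ) * ∑ i ∈ Finset.range n, det2 (v (i : ZMod n)) (v ((i : ZMod n) + 1))

/-- The interior angle at vertex `v i` of a counterclockwise polygonization: the unique
real number in `(0, 2π)` congruent modulo `2π` to the oriented angle from
`v (i+1) - v i` to `v (i-1) - v i`. -/
def interiorAngle (n : ℕ) (v : ZMod n → Plane) (i : ZMod n) : ℝ :=
  let a := (planeOrientation.oangle (v (i + 1) - v i) (v (i - 1) - v i)).toReal
  if 0 < a then a else a + 2 * π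

/-- A point `p` of `S` is an extreme point of the convex hull of `S` if it does not lie
in the convex hull of the other points of `S`. -/
def IsExtremePt (S : Set Plane) (p : Plane) : Prop :=
  p ∈ S ∧ p ∉ convexHull ℝ (S \ {p})

/-- If `d` lies outside the convex hull of a finite nonempty set `S` of points in the plane,
then there are points `x, y ∈ S` such that the convex hull of `S` is contained in the cone
at `d` spanned by the directions `x − d` and `y − d`. -/
theorem convexHull_subset_cone (S : Finset Plane) (hS : S.Nonempty) (d : Plane)
    (hd : d ∉ convexHull ℝ (S : Set Plane)) :
    ∃ x ∈ S, ∃ y ∈ S, convexHull ℝ (S : Set Plane) ⊆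
      {p : Plane | ∃ α β : ℝ, 0 ≤ α ∧ 0 ≤ β ∧ p = d + α • (x - d) + β • (y - d)} := by
  obtain ⟨f, c, hfd, hfs⟩ := geometric_hahn_banach_point_closed
    (convex_convexHull ℝ _) ((S : Set Plane).toFinite.isClosed_convexHull (𝕜 := ℝ)) hd
  set a0 := f (EuclideanSpace.single (0 : Fin 2) (1 : ℝ)) with ha0
  set a1 := f (EuclideanSpace.single (1 : Fin 2) (1 : ℝ)) with ha1
  have hf : ∀ v : Plane, f v = a0 * v 0 + a1 * v 1 := by
    intro v
    have hv : v = v 0 • (EuclideanSpace.single (0 : Fin 2) (1 : ℝ)) +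
        v 1 • (EuclideanSpace.single (1 : Fin 2) (1 : ℝ)) := by
      ext k
      fin_cases k <;>
        simp [EuclideanSpace.single_apply, PiLp.add_apply, PiLp.smul_apply]
    conv_lhs => rw [hv]
    rw [map_add, map_smul, map_smul]
    simp [smul_eq_mul, ha0, ha1]
    ring
  have hpos : ∀ s ∈ S, 0 < f (s - d) := by
    intro s hs
    have := hfs s (subset_convexHull ℝ _ hs)
    rw [map_sub]; linarith
  have hA : 0 < a0 ^ 2 + a1 ^ 2 := by
    rcases hS with ⟨s0, hs0⟩
    by_contra h
    have h0 : a0 = 0 := by nlinarith [sq_nonneg a0, sq_nonneg a1]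
    have h1 : a1 = 0 := by nlinarith [sq_nonneg a0, sq_nonneg a1]
    have := hpos s0 hs0
    rw [hf, h0, h1] at this
    linarith
  -- D v = det of (a, v)
  set D : Plane → ℝ := fun w => a0 * w 1 - a1 * w 0 with hD
  set g : Plane → ℝ := fun s => D (s - d) / f (s - d) with hg
  -- key identity: (a0²+a1²) * det2 u w = f u * D w - D u * f w
  have hid : ∀ u w : Plane, (a0 ^ 2 + a1 ^ 2) * det2 u w = f u * D w - D u * f w := by
    intro u w
    rw [hf, hf, hD, det2]
    ring
  have hdet : ∀ s ∈ S, ∀ t ∈ S, g s ≤ g t → 0 ≤ det2 (s - d) (t - d) := by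
    intro s hs t ht h
    have hps := hpos s hs
    have hpt := hpos t ht
    rw [hg] at h
    rw [div_le_div_iff₀ hps hpt] at h
    nlinarith [hid (s - d) (t - d)]
  obtain ⟨x, hx, hxmin⟩ := S.exists_min_image g hS
  obtain ⟨y, hy, hymax⟩ := S.exists_max_image g hS
  refine ⟨x, hx, y, hy, ?_⟩
  apply convexHull_min
  · -- S ⊆ cone
    intro s hs
    have h1 : 0 ≤ det2 (x - d) (s - d) := hdet x hx s hs (hxmin s hs)
    have h2 : 0 ≤ det2 (s - d) (y - d) := hdet s hs y hy (hymax s hs)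
    have h3 : 0 ≤ det2 (x - d) (y - d) := hdet x hx y hy (le_trans (hxmin s hs) (hymax s hs))
    rcases eq_or_lt_of_le h3 with h3' | h3'
    · -- degenerate: x-d and y-d parallel; then s-d parallel too
      -- g x = g y, so g s = g x, so det2 (s-d) (x-d) ≥ 0 and det2 (x-d)(s-d) ≥ 0
      have hgxy : g y ≤ g x := by
        have hps := hpos x hx
        have hpt := hpos y hy
        rw [hg, div_le_div_iff₀ hpt hps]
        nlinarith [hid (x - d) (y - d)]
      have h4 : 0 ≤ det2 (s - d) (x - d) := hdet s hs x hx (le_trans (hymax s hs) hgxy)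
      have h5 : det2 (x - d) (s - d) = 0 := by
        have : det2 (s - d) (x - d) = -det2 (x - d) (s - d) := by rw [det2, det2]; ring
        linarith [h4, h1, this ▸ h4]
      -- s - d = t • (x - d), t = f(s-d)/f(x-d)
      refine ⟨f (s - d) / f (x - d), 0, le_of_lt (div_pos (hpos s hs) (hpos x hx)), le_refl 0, ?_⟩
      have hpx := hpos x hx
      ext k
      have hcomp : f (x - d) * ((s : Plane) k - d k) = f (s - d) * ((x : Plane) k - d k) := by
        have hd5 : ((x : Plane) 0 - d 0) * (s 1 - d 1) - (x 1 - d 1) * (s 0 - d 0) = 0 := by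
          have h5' := h5
          rw [det2] at h5'
          simpa [PiLp.sub_apply] using h5'
        rw [hf, hf]
        simp only [PiLp.sub_apply]
        fin_cases k
        · show (a0 * ((x : Plane) 0 - d 0) + a1 * (x 1 - d 1)) * (s 0 - d 0) =
            (a0 * ((s : Plane) 0 - d 0) + a1 * (s 1 - d 1)) * (x 0 - d 0)
          linear_combination (-a1) * hd5
        · show (a0 * ((x : Plane) 0 - d 0) + a1 * (x 1 - d 1)) * (s 1 - d 1) =
            (a0 * ((s : Plane) 0 - d 0) + a1 * (s 1 - d 1)) * (x 1 - d 1)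
          linear_combination a0 * hd5
      have hkey : f (s - d) / f (x - d) * ((x : Plane) k - d k) = s k - d k := by
        rw [div_mul_eq_mul_div, ← hcomp, mul_comm, mul_div_assoc, div_self (ne_of_gt hpx),
          mul_one]
      simp only [PiLp.add_apply, PiLp.smul_apply, PiLp.sub_apply, smul_eq_mul, zero_mul,
        add_zero]
      rw [hkey]
      ring
    · -- nondegenerate: Cramer
      have hne : det2 (x - d) (y - d) ≠ 0 := ne_of_gt h3'
      refine ⟨det2 (s - d) (y - d) / det2 (x - d) (y - d),
        det2 (x - d) (s - d) / det2 (x - d) (y - d),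
        div_nonneg h2 (le_of_lt h3'), div_nonneg h1 (le_of_lt h3'), ?_⟩
      ext k
      simp only [PiLp.add_apply, PiLp.smul_apply, PiLp.sub_apply, smul_eq_mul]
      rw [det2, det2, det2]
      simp only [PiLp.sub_apply]
      rw [det2] at hne
      simp only [PiLp.sub_apply] at hne
      have hne' : ((y : Plane) 1 - d 1) * (x 0 - d 0) - (y 0 - d 0) * (x 1 - d 1) ≠ 0 := by
        intro h; apply hne; linarith
      field_simp
      fin_cases k <;> simp <;> field_simp <;> ring
  · -- cone is convex
    rintro p ⟨α1, β1, hα1, hβ1, hp⟩ q ⟨α2, β2, hα2, hβ2, hq⟩ a b ha hb hab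
    refine ⟨a * α1 + b * α2, a * β1 + b * β2, by positivity, by positivity, ?_⟩
    subst hp hq
    have hb' : b = 1 - a := by linarith
    subst hb'
    module
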